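/- Let X be a right H-module and let f be a linear functional on H⊗X such that η▷f = ε(η)f for all η ∈ H, where (η▷f)(ω ⊗ x) = f(S^{-1}(η_(0)) ω η_(1) ⊗ x◁η_(2)). Then f(ω ⊗ x) = f(ω_(0) ⊗ x◁ω_(1)) for all ω ∈ H and x ∈ X. -/

import Mathlib

open scoped TensorProduct

noncomputable section

/-- A Hopf `ℂ`-algebra with invertible antipode, together with a chosen finite
(Sweedler) representation of the comultiplication: `Δ ω = ∑_{p ∈ Δl ω} p.1 ⊗ p.2`. -/
structure HopfData (H : Type) [Ring H] [HopfAlgebra ℂ H] where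
  /-- the inverse of the antipode -/
  Sinv : H →ₗ[ℂ] H
  Sinv_antipode : ∀ ω : H, Sinv (HopfAlgebra.antipode (R := ℂ) ω) = ω
  antipode_Sinv : ∀ ω : H, HopfAlgebra.antipode (R := ℂ) (Sinv ω) = ω
  /-- a chosen list representation of the comultiplication -/
  Δl : H → List (H × H)
  Δl_repr : ∀ ω : H,
    (Coalgebra.comul (R := ℂ) ω : H ⊗[ℂ] H) = ((Δl ω).map fun p => p.1 ⊗ₜ[ℂ] p.2).sum

variable {H : Type} [Ring H] [HopfAlgebra ℂ H]

/-- the counit, as a `ℂ`-valued function -/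
def epsi (ω : H) : ℂ := Coalgebra.counit (R := ℂ) ω

/-- Iterated Sweedler decomposition: `sw n ω` represents
`Δⁿ ω = ∑_v v 0 ⊗ ⋯ ⊗ v n`, where `Δⁿ = (ι ⊗ Δ) Δ^{n-1}`. -/
def HopfData.sw (D : HopfData H) : (n : ℕ) → H → List (Fin (n + 1) → H)
  | 0, ω => [fun _ => ω]
  | n + 1, ω =>
    (D.sw n ω).flatMap fun v =>
      (D.Δl (v (Fin.last n))).map fun p =>
        Fin.snoc (Function.update v (Fin.last n) p.1) p.2

/-- A right `H`-module structure (over `ℂ`), recorded as the antihomomorphism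
`act : H → End(B)`, so `act ω b` stands for `b ◁ ω`. -/
structure RAct (H : Type) [Ring H] [HopfAlgebra ℂ H] (B : Type) [AddCommGroup B]
    [Module ℂ B] where
  act : H →ₗ[ℂ] B →ₗ[ℂ] B
  act_one : act 1 = LinearMap.id
  act_mul : ∀ ω η : H, act (ω * η) = (act η) ∘ₗ (act ω)

/-- A unital right `H`-module algebra structure on `B`:
`(b₁ b₂) ◁ ω = ∑ (b₁ ◁ ω₍₀₎)(b₂ ◁ ω₍₁₎)` and `1 ◁ ω = ε(ω) 1`. -/
structure MAlg (D : HopfData H) (B : Type) [Ring B] [Algebra ℂ B] extends RAct H B where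
  act_mul_mul : ∀ (ω : H) (b₁ b₂ : B),
    act ω (b₁ * b₂) = ((D.Δl ω).map fun p => act p.1 b₁ * act p.2 b₂).sum
  act_algOne : ∀ ω : H, act ω (1 : B) = epsi ω • (1 : B)


/-- the action as a plain function: `fn ω b = b ◁ ω` -/
def RAct.fn {H : Type} [Ring H] [HopfAlgebra ℂ H] {B : Type} [AddCommGroup B] [Module ℂ B]
    (A : RAct H B) : H → B → B := fun ω x => A.act ω x

/-- the action of a module algebra as a plain function -/
def MAlg.fn {H : Type} [Ring H] [HopfAlgebra ℂ H] {B : Type} [Ring B] [Algebra ℂ B]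
    {D : HopfData H} (A : MAlg D B) : H → B → B := A.toRAct.fn

section InvariantAux

open TensorProduct LinearMap Coalgebra HopfAlgebra

set_option maxHeartbeats 1000000
set_option synthInstance.maxHeartbeats 400000

/-- convolution product on linear maps from a coalgebra to `H` -/
noncomputable def conv {C : Type} [AddCommGroup C] [Module ℂ C] [CoalgebraStruct ℂ C]
    (F G : C →ₗ[ℂ] H) : C →ₗ[ℂ] H :=
  mul' ℂ H ∘ₗ map F G ∘ₗ Coalgebra.comul

/-- convolution unit -/
noncomputable def cuH (C : Type) [AddCommGroup C] [Module ℂ C] [CoalgebraStruct ℂ C] :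
    C →ₗ[ℂ] H :=
  Algebra.linearMap ℂ H ∘ₗ Coalgebra.counit

lemma mul_assoc_pt (w : H ⊗[ℂ] (H ⊗[ℂ] H)) :
    mul' ℂ H ((mul' ℂ H).rTensor H ((TensorProduct.assoc ℂ H H H).symm w)) =
      mul' ℂ H ((mul' ℂ H).lTensor H w) := by
  induction w using TensorProduct.induction_on with
  | zero => simp
  | tmul a yz =>
    induction yz using TensorProduct.induction_on with
    | zero => simp
    | tmul b c => simp [mul_assoc]
    | add u v hu hv => simp only [tmul_add, map_add, hu, hv]
  | add u v hu hv => simp only [map_add, hu, hv]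

lemma conv_assoc {C : Type} [AddCommGroup C] [Module ℂ C] [Coalgebra ℂ C]
    (F G K : C →ₗ[ℂ] H) : conv (conv F G) K = conv F (conv G K) := by
  ext c
  have hm : map (conv F G) K
      = (mul' ℂ H).rTensor H ∘ₗ (map (map F G) K ∘ₗ comul.rTensor C) := by
    have h1 := map_comp (mul' ℂ H) LinearMap.id ((map F G) ∘ₗ Coalgebra.comul) K
    have h2 := map_comp (map F G) K Coalgebra.comul LinearMap.id
    rw [id_comp] at h1
    rw [comp_id] at h2
    rw [show conv F G = (mul' ℂ H) ∘ₗ ((map F G) ∘ₗ Coalgebra.comul) from rfl, h1, h2]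
    rfl
  have hm' : map F (conv G K)
      = (mul' ℂ H).lTensor H ∘ₗ (map F (map G K) ∘ₗ comul.lTensor C) := by
    have h1 := map_comp LinearMap.id (mul' ℂ H) F ((map G K) ∘ₗ Coalgebra.comul)
    have h2 := map_comp F (map G K) LinearMap.id Coalgebra.comul
    rw [id_comp] at h1
    rw [comp_id] at h2
    rw [show conv G K = (mul' ℂ H) ∘ₗ ((map G K) ∘ₗ Coalgebra.comul) from rfl, h1, h2]
    rfl
  have e1 : (conv (conv F G) K) c
      = mul' ℂ H ((mul' ℂ H).rTensor H
          (map (map F G) K (comul.rTensor C (Coalgebra.comul c)))) := by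
    show mul' ℂ H ((map (conv F G) K) (Coalgebra.comul c)) = _
    rw [hm]; rfl
  have e2 : (conv F (conv G K)) c
      = mul' ℂ H ((mul' ℂ H).lTensor H
          (map F (map G K) (comul.lTensor C (Coalgebra.comul c)))) := by
    show mul' ℂ H ((map F (conv G K)) (Coalgebra.comul c)) = _
    rw [hm']; rfl
  rw [e1, e2, ← coassoc_symm_apply c, map_map_assoc_symm]
  exact mul_assoc_pt _

lemma conv_unit_right {C : Type} [AddCommGroup C] [Module ℂ C] [Coalgebra ℂ C]
    (F : C →ₗ[ℂ] H) : conv F (cuH C) = F := by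
  ext c
  have h2 := map_comp F (Algebra.linearMap ℂ H) LinearMap.id (Coalgebra.counit (R := ℂ) (A := C))
  rw [comp_id] at h2
  have : map F (cuH C) = map F (Algebra.linearMap ℂ H) ∘ₗ counit.lTensor C := by
    rw [show cuH (H := H) C = Algebra.linearMap ℂ H ∘ₗ Coalgebra.counit from rfl, h2]
    rfl
  simp only [conv, comp_apply, this, lTensor_counit_comul]
  simp [Algebra.linearMap_apply]

lemma conv_unit_left {C : Type} [AddCommGroup C] [Module ℂ C] [Coalgebra ℂ C]
    (F : C →ₗ[ℂ] H) : conv (cuH C) F = F := by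
  ext c
  have h2 := map_comp (Algebra.linearMap ℂ H) F (Coalgebra.counit (R := ℂ) (A := C)) LinearMap.id
  rw [comp_id] at h2
  have : map (cuH C) F = map (Algebra.linearMap ℂ H) F ∘ₗ counit.rTensor C := by
    rw [show cuH (H := H) C = Algebra.linearMap ℂ H ∘ₗ Coalgebra.counit from rfl, h2]
    rfl
  simp only [conv, comp_apply, this, rTensor_counit_comul]
  simp [Algebra.linearMap_apply]

lemma conv_pullback {C C' : Type} [AddCommGroup C] [Module ℂ C] [CoalgebraStruct ℂ C]
    [AddCommGroup C'] [Module ℂ C'] [CoalgebraStruct ℂ C']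
    (φ : C' →ₗ[ℂ] C) (hφ : Coalgebra.comul ∘ₗ φ = map φ φ ∘ₗ Coalgebra.comul)
    (F G : C →ₗ[ℂ] H) :
    conv (F ∘ₗ φ) (G ∘ₗ φ) = conv F G ∘ₗ φ := by
  rw [show conv F G ∘ₗ φ = mul' ℂ H ∘ₗ (map F G ∘ₗ (Coalgebra.comul ∘ₗ φ)) from rfl, hφ,
    conv, map_comp]
  rfl

lemma mul_tttc (x y : H ⊗[ℂ] H) :
    map (mul' ℂ H) (mul' ℂ H) (tensorTensorTensorComm ℂ H H H H (x ⊗ₜ[ℂ] y)) = x * y := by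
  induction x using TensorProduct.induction_on with
  | zero => simp
  | tmul a₁ a₂ =>
    induction y using TensorProduct.induction_on with
    | zero => simp
    | tmul b₁ b₂ => simp [Algebra.TensorProduct.tmul_mul_tmul]
    | add u v hu hv => simp only [tmul_add, map_add, hu, hv, mul_add]
  | add u v hu hv => simp only [add_tmul, map_add, hu, hv, add_mul]

lemma comul_mul'_hom :
    (Coalgebra.comul (R := ℂ) (A := H)) ∘ₗ mul' ℂ H
      = map (mul' ℂ H) (mul' ℂ H) ∘ₗ (Coalgebra.comul (R := ℂ) (A := H ⊗[ℂ] H)) := by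
  apply TensorProduct.ext'
  intro a b
  simp only [comp_apply, mul'_apply, Bialgebra.comul_mul,
    TensorProduct.comul_tmul, map_tmul, tensorTensorTensorComm_tmul]
  rw [← mul_tttc]
  rfl

lemma cuH_mul'_hom : cuH (H := H) (H ⊗[ℂ] H) = cuH H ∘ₗ mul' ℂ H := by
  apply TensorProduct.ext'
  intro a b
  simp [cuH, TensorProduct.counit_tmul, Bialgebra.counit_mul]
  exact Algebra.commutes _ _

/-- `Q''` : `(a₁ ⊗ a₂) ⊗ h ↦ a₁ * (h * S a₂)` -/
noncomputable def Qaux : (H ⊗[ℂ] H) ⊗[ℂ] H →ₗ[ℂ] H :=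
  mul' ℂ H ∘ₗ (mul' ℂ H).lTensor H ∘ₗ ((antipode (R := ℂ)).lTensor H).lTensor H
    ∘ₗ ((TensorProduct.comm ℂ H H).toLinearMap).lTensor H
    ∘ₗ (TensorProduct.assoc ℂ H H H).toLinearMap

@[simp] lemma Qaux_tmul (a₁ a₂ h : H) :
    Qaux ((a₁ ⊗ₜ[ℂ] a₂) ⊗ₜ[ℂ] h) = a₁ * (h * antipode (R := ℂ) a₂) := by
  simp [Qaux]

/-- `Fm` : `a ⊗ b ↦ S b * S a` -/
noncomputable def Fm : H ⊗[ℂ] H →ₗ[ℂ] H :=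
  mul' ℂ H ∘ₗ map (antipode (R := ℂ)) (antipode (R := ℂ))
    ∘ₗ (TensorProduct.comm ℂ H H).toLinearMap

@[simp] lemma Fm_tmul (a b : H) :
    Fm (a ⊗ₜ[ℂ] b) = antipode (R := ℂ) b * antipode (R := ℂ) a := by
  simp [Fm]

lemma claim1 : conv (antipode (R := ℂ) ∘ₗ mul' ℂ H) (mul' ℂ H) = cuH (H ⊗[ℂ] H) := by
  have h := conv_pullback (H := H) (mul' ℂ H) comul_mul'_hom (antipode (R := ℂ)) LinearMap.id
  rw [id_comp] at h
  rw [h, cuH_mul'_hom]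
  congr 1
  exact mul_antipode_rTensor_comul (R := ℂ) (A := H)

lemma aux2 (x y : H ⊗[ℂ] H) :
    mul' ℂ H (map (mul' ℂ H) Fm (tensorTensorTensorComm ℂ H H H H (x ⊗ₜ[ℂ] y)))
      = Qaux (x ⊗ₜ[ℂ] (mul' ℂ H ((antipode (R := ℂ)).lTensor H y))) := by
  induction x using TensorProduct.induction_on with
  | zero => simp
  | tmul a₁ a₂ =>
    induction y using TensorProduct.induction_on with
    | zero => simp
    | tmul b₁ b₂ => simp [mul_assoc]
    | add u v hu hv => simp only [tmul_add, map_add, hu, hv]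
  | add u v hu hv => simp only [add_tmul, map_add, hu, hv]

lemma comul_tmul_HH (a b : H) :
    (Coalgebra.comul (R := ℂ) (A := H ⊗[ℂ] H)) (a ⊗ₜ[ℂ] b)
      = tensorTensorTensorComm ℂ H H H H
          ((Coalgebra.comul (R := ℂ) a) ⊗ₜ[ℂ] (Coalgebra.comul (R := ℂ) b)) := rfl

lemma counit_tmul_HH (a b : H) :
    (Coalgebra.counit (R := ℂ) (A := H ⊗[ℂ] H)) (a ⊗ₜ[ℂ] b)
      = Coalgebra.counit (R := ℂ) a * Coalgebra.counit (R := ℂ) b := by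
  rw [TensorProduct.counit_tmul, smul_eq_mul, mul_comm]

lemma aux3 (x : H ⊗[ℂ] H) :
    Qaux (x ⊗ₜ[ℂ] (1 : H)) = mul' ℂ H ((antipode (R := ℂ)).lTensor H x) := by
  induction x using TensorProduct.induction_on with
  | zero => simp
  | tmul a₁ a₂ => simp
  | add u v hu hv => simp only [add_tmul, map_add, hu, hv]

lemma claim2 : conv (mul' ℂ H) Fm = cuH (H ⊗[ℂ] H) := by
  apply TensorProduct.ext'
  intro a b
  show mul' ℂ H ((map (mul' ℂ H) Fm) (Coalgebra.comul (a ⊗ₜ[ℂ] b)))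
      = Algebra.linearMap ℂ H (Coalgebra.counit (a ⊗ₜ[ℂ] b))
  rw [comul_tmul_HH, counit_tmul_HH, aux2, mul_antipode_lTensor_comul_apply,
    Algebra.algebraMap_eq_smul_one (Coalgebra.counit (R := ℂ) b), tmul_smul, map_smul, aux3,
    mul_antipode_lTensor_comul_apply]
  simp only [Algebra.linearMap_apply]
  rw [Algebra.smul_def, ← map_mul, mul_comm (Coalgebra.counit (R := ℂ) b)]

lemma antipode_comp_mul' :
    (antipode (R := ℂ)) ∘ₗ mul' ℂ H = Fm (H := H) := by
  calc antipode (R := ℂ) ∘ₗ mul' ℂ H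
      = conv (antipode (R := ℂ) ∘ₗ mul' ℂ H) (cuH (H ⊗[ℂ] H)) := (conv_unit_right _).symm
    _ = conv (antipode (R := ℂ) ∘ₗ mul' ℂ H) (conv (mul' ℂ H) Fm) := by rw [claim2]
    _ = conv (conv (antipode (R := ℂ) ∘ₗ mul' ℂ H) (mul' ℂ H)) Fm := (conv_assoc _ _ _).symm
    _ = conv (cuH (H ⊗[ℂ] H)) Fm := by rw [claim1]
    _ = Fm := conv_unit_left _

lemma antipode_mul_rev (a b : H) :
    antipode (R := ℂ) (a * b) = antipode (R := ℂ) b * antipode (R := ℂ) a := by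
  have := DFunLike.congr_fun (antipode_comp_mul' (H := H)) (a ⊗ₜ[ℂ] b)
  simpa using this

lemma antipode_one' : antipode (R := ℂ) (1 : H) = 1 := by
  have := mul_antipode_rTensor_comul_apply (R := ℂ) (A := H) 1
  simpa [Algebra.TensorProduct.one_def] using this

lemma sinv_collapse (τ : H →ₗ[ℂ] H)
    (hτ₁ : ∀ ω : H, τ (antipode (R := ℂ) ω) = ω)
    (hτ₂ : ∀ ω : H, antipode (R := ℂ) (τ ω) = ω) (a : H) :
    mul' ℂ H ((τ.rTensor H) ((TensorProduct.comm ℂ H H) (Coalgebra.comul (R := ℂ) a)))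
      = algebraMap ℂ H (Coalgebra.counit (R := ℂ) a) := by
  have hinj : Function.Injective (antipode (R := ℂ) (A := H)) := fun x y h => by
    rw [← hτ₁ x, h, hτ₁]
  apply hinj
  have key : ∀ z : H ⊗[ℂ] H,
      antipode (R := ℂ) (mul' ℂ H ((τ.rTensor H) ((TensorProduct.comm ℂ H H) z)))
        = mul' ℂ H ((antipode (R := ℂ)).rTensor H z) := by
    intro z
    induction z using TensorProduct.induction_on with
    | zero => simp
    | tmul c d => simp [antipode_mul_rev, hτ₂]
    | add u v hu hv => simp only [map_add, hu, hv]
  rw [key, mul_antipode_rTensor_comul_apply, Algebra.algebraMap_eq_smul_one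
    (Coalgebra.counit (R := ℂ) a), map_smul, antipode_one']


lemma one_tmul_collapse (zz : H ⊗[ℂ] H) :
    (mul' ℂ H).rTensor H ((TensorProduct.assoc ℂ H H H).symm ((1 : H) ⊗ₜ[ℂ] zz)) = zz := by
  induction zz using TensorProduct.induction_on with
  | zero => simp
  | tmul c d => simp
  | add u v hu hv => simp only [tmul_add, map_add, hu, hv]

lemma list_sum_flatMap {α : Type} {M : Type} [AddCommMonoid M] (l : List α) (f : α → List M) :
    (l.flatMap f).sum = (l.map fun a => (f a).sum).sum := by
  induction l with
  | nil => simp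
  | cons a t ih => simp [ih]

lemma tmul_list_sum {M : Type} [AddCommGroup M] [Module ℂ M] (h : H) (l : List M) :
    h ⊗ₜ[ℂ] l.sum = (l.map fun z => h ⊗ₜ[ℂ] z).sum := by
  exact map_list_sum (TensorProduct.mk ℂ H M h) l

lemma HopfData.Δl_sum (D : HopfData H) {M : Type} [AddCommGroup M] [Module ℂ M]
    (Φ : H ⊗[ℂ] H →ₗ[ℂ] M) (ω : H) :
    ((D.Δl ω).map fun p => Φ (p.1 ⊗ₜ[ℂ] p.2)).sum = Φ (Coalgebra.comul (R := ℂ) ω) := by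
  rw [D.Δl_repr, map_list_sum, List.map_map]
  rfl

lemma HopfData.sw2_sum (D : HopfData H) {M : Type} [AddCommGroup M] [Module ℂ M]
    (Φ : H ⊗[ℂ] (H ⊗[ℂ] H) →ₗ[ℂ] M) (η : H) :
    ((D.sw 2 η).map fun v => Φ (v 0 ⊗ₜ[ℂ] (v 1 ⊗ₜ[ℂ] v 2))).sum
      = Φ ((Coalgebra.comul (R := ℂ)).lTensor H (Coalgebra.comul (R := ℂ) η)) := by
  have hsw2 : D.sw 2 η = (D.Δl η).flatMap fun p => (D.Δl p.2).map fun q =>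
      Fin.snoc (Function.update
        (Fin.snoc (Function.update (fun _ => η) (Fin.last 0) p.1) p.2) (Fin.last 1) q.1) q.2 := by
    simp only [HopfData.sw, List.flatMap_singleton, List.flatMap_map, Fin.snoc_last]
  rw [hsw2, List.map_flatMap, list_sum_flatMap]
  simp only [List.map_map]
  rw [D.Δl_repr η]
  rw [map_list_sum]
  rw [map_list_sum]
  simp only [List.map_map]
  congr 1
  apply List.map_congr_left
  intro p _
  show ((D.Δl p.2).map fun q => Φ (p.1 ⊗ₜ[ℂ] (q.1 ⊗ₜ[ℂ] q.2))).sum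
      = Φ ((Coalgebra.comul (R := ℂ)).lTensor H (p.1 ⊗ₜ[ℂ] p.2))
  rw [lTensor_tmul, D.Δl_repr p.2, tmul_list_sum, map_list_sum, List.map_map, List.map_map]
  rfl

end InvariantAux

set_option maxHeartbeats 1000000
set_option synthInstance.maxHeartbeats 400000

/-- if `f` is an `H`-invariant linear functional on `H ⊗ X` (for a right
`H`-module `X`), then `f(ω ⊗ x) = f(ω₍₀₎ ⊗ x ◁ ω₍₁₎)`. -/
theorem invariant_functional_absorbs_coaction
    {H : Type} [Ring H] [HopfAlgebra ℂ H] (D : HopfData H)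
    {X : Type} [AddCommGroup X] [Module ℂ X] (A : RAct H X)
    (f : H →ₗ[ℂ] X →ₗ[ℂ] ℂ)
    (hf : ∀ (η ω : H) (x : X),
      ((D.sw 2 η).map fun v => f (D.Sinv (v 0) * ω * v 1) (A.act (v 2) x)).sum
        = epsi η * f ω x) :
    ∀ (ω : H) (x : X),
      ((D.Δl ω).map fun p => f p.1 (A.act p.2 x)).sum = f ω x := by
  intro ω x
  let g : H →ₗ[ℂ] H →ₗ[ℂ] ℂ := f.compl₂ (A.act.flip x)
  let G : H ⊗[ℂ] H →ₗ[ℂ] ℂ := TensorProduct.lift g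
  let N : H ⊗[ℂ] H →ₗ[ℂ] H :=
    LinearMap.mul' ℂ H ∘ₗ D.Sinv.rTensor H ∘ₗ (TensorProduct.comm ℂ H H).toLinearMap
  let P : (H ⊗[ℂ] H) ⊗[ℂ] (H ⊗[ℂ] H) →ₗ[ℂ] H ⊗[ℂ] H :=
    (LinearMap.mul' ℂ H).rTensor H ∘ₗ (TensorProduct.assoc ℂ H H H).symm.toLinearMap
      ∘ₗ N.rTensor (H ⊗[ℂ] H)
  let V : (H ⊗[ℂ] H) ⊗[ℂ] (H ⊗[ℂ] H) →ₗ[ℂ] ℂ := G ∘ₗ P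
  let W : H ⊗[ℂ] (H ⊗[ℂ] (H ⊗[ℂ] H)) →ₗ[ℂ] ℂ :=
    V ∘ₗ (TensorProduct.assoc ℂ H H (H ⊗[ℂ] H)).symm.toLinearMap
  let D2 : H →ₗ[ℂ] H ⊗[ℂ] (H ⊗[ℂ] H) :=
    (Coalgebra.comul (R := ℂ) (A := H)).lTensor H ∘ₗ Coalgebra.comul (R := ℂ)
  have hG : ∀ a b : H, G (a ⊗ₜ[ℂ] b) = f a (A.act b x) := fun a b => by
    simp [G, g]
  have e1 : ((D.Δl ω).map fun p => f p.1 (A.act p.2 x)).sum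
      = G (Coalgebra.comul (R := ℂ) ω) := by
    rw [← D.Δl_sum G ω]
    exact congrArg List.sum (List.map_congr_left fun p _ => (hG p.1 p.2).symm)
  have hassoc_nat : ∀ z : (H ⊗[ℂ] H) ⊗[ℂ] H,
      ((Coalgebra.comul (R := ℂ) (A := H)).lTensor H).lTensor H
          (TensorProduct.assoc ℂ H H H z)
        = TensorProduct.assoc ℂ H H (H ⊗[ℂ] H)
            ((Coalgebra.comul (R := ℂ) (A := H)).lTensor (H ⊗[ℂ] H) z) := by
    intro z
    induction z using TensorProduct.induction_on with
    | zero => simp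
    | tmul u c =>
      induction u using TensorProduct.induction_on with
      | zero => simp
      | tmul a b => simp
      | add u' v' hu hv => simp only [TensorProduct.add_tmul, map_add, hu, hv]
    | add u' v' hu hv => simp only [map_add, hu, hv]
  have hE : D2.lTensor H (Coalgebra.comul (R := ℂ) ω)
      = TensorProduct.assoc ℂ H H (H ⊗[ℂ] H)
          ((Coalgebra.comul (R := ℂ) (A := H)).lTensor (H ⊗[ℂ] H)
            ((Coalgebra.comul (R := ℂ) (A := H)).rTensor H (Coalgebra.comul (R := ℂ) ω))) := by
    show (((Coalgebra.comul (R := ℂ) (A := H)).lTensor H ∘ₗ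
        Coalgebra.comul (R := ℂ)).lTensor H) (Coalgebra.comul (R := ℂ) ω) = _
    rw [LinearMap.lTensor_comp]
    simp only [LinearMap.comp_apply]
    rw [← Coalgebra.coassoc_apply ω, hassoc_nat]
  have hNΔ : N ∘ₗ Coalgebra.comul (R := ℂ) (A := H)
      = Algebra.linearMap ℂ H ∘ₗ Coalgebra.counit (R := ℂ) :=
    LinearMap.ext fun a => sinv_collapse D.Sinv D.Sinv_antipode D.antipode_Sinv a
  have hWV : ∀ u, W (TensorProduct.assoc ℂ H H (H ⊗[ℂ] H) u) = V u := fun u => by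
    show V ((TensorProduct.assoc ℂ H H (H ⊗[ℂ] H)).symm
      (TensorProduct.assoc ℂ H H (H ⊗[ℂ] H) u)) = V u
    rw [LinearEquiv.symm_apply_apply]
  have e2 : W (D2.lTensor H (Coalgebra.comul (R := ℂ) ω))
      = G (Coalgebra.comul (R := ℂ) ω) := by
    rw [hE, hWV]
    show G (P ((Coalgebra.comul (R := ℂ) (A := H)).lTensor (H ⊗[ℂ] H)
        ((Coalgebra.comul (R := ℂ) (A := H)).rTensor H (Coalgebra.comul (R := ℂ) ω)))) = _
    congr 1
    have hx : ∀ z : H ⊗[ℂ] H,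
        (Coalgebra.comul (R := ℂ) (A := H)).lTensor (H ⊗[ℂ] H)
            ((Coalgebra.comul (R := ℂ) (A := H)).rTensor H z)
          = TensorProduct.map (Coalgebra.comul (R := ℂ)) (Coalgebra.comul (R := ℂ)) z :=
      fun z => by rw [← LinearMap.lTensor_comp_rTensor]; rfl
    rw [hx]
    show (LinearMap.mul' ℂ H).rTensor H ((TensorProduct.assoc ℂ H H H).symm.toLinearMap
        (N.rTensor (H ⊗[ℂ] H) (TensorProduct.map (Coalgebra.comul (R := ℂ))
          (Coalgebra.comul (R := ℂ)) (Coalgebra.comul (R := ℂ) ω)))) = _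
    have hy : ∀ z : H ⊗[ℂ] H,
        N.rTensor (H ⊗[ℂ] H) (TensorProduct.map (Coalgebra.comul (R := ℂ))
            (Coalgebra.comul (R := ℂ)) z)
          = TensorProduct.map (N ∘ₗ Coalgebra.comul (R := ℂ)) (Coalgebra.comul (R := ℂ)) z :=
      fun z => by rw [← LinearMap.rTensor_comp_map]; rfl
    rw [hy, hNΔ]
    have hz : ∀ z : H ⊗[ℂ] H,
        TensorProduct.map (Algebra.linearMap ℂ H ∘ₗ Coalgebra.counit (R := ℂ))
            (Coalgebra.comul (R := ℂ) (A := H)) z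
          = TensorProduct.map (Algebra.linearMap ℂ H) (Coalgebra.comul (R := ℂ))
              ((Coalgebra.counit (R := ℂ)).rTensor H z) :=
      fun z => by rw [← LinearMap.map_comp_rTensor]; rfl
    rw [hz, Coalgebra.rTensor_counit_comul, TensorProduct.map_tmul]
    simp only [Algebra.linearMap_apply, map_one]
    exact one_tmul_collapse _
  have e3 : W (D2.lTensor H (Coalgebra.comul (R := ℂ) ω))
      = ((D.Δl ω).map fun p => W (p.1 ⊗ₜ[ℂ] D2 p.2)).sum :=
    (D.Δl_sum (W ∘ₗ D2.lTensor H) ω).symm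
  have hWt : ∀ a b c d : H, W (d ⊗ₜ[ℂ] (a ⊗ₜ[ℂ] (b ⊗ₜ[ℂ] c)))
      = f (D.Sinv a * d * b) (A.act c x) := by
    intro a b c d
    show V ((TensorProduct.assoc ℂ H H (H ⊗[ℂ] H)).symm
      (d ⊗ₜ[ℂ] (a ⊗ₜ[ℂ] (b ⊗ₜ[ℂ] c)))) = _
    rw [TensorProduct.assoc_symm_tmul]
    show G ((LinearMap.mul' ℂ H).rTensor H ((TensorProduct.assoc ℂ H H H).symm
        ((N (d ⊗ₜ[ℂ] a)) ⊗ₜ[ℂ] (b ⊗ₜ[ℂ] c)))) = _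
    have hN : N (d ⊗ₜ[ℂ] a) = D.Sinv a * d := by
      show LinearMap.mul' ℂ H (D.Sinv.rTensor H (TensorProduct.comm ℂ H H (d ⊗ₜ[ℂ] a))) = _
      simp
    rw [hN, TensorProduct.assoc_symm_tmul]
    show G (((D.Sinv a * d) * b) ⊗ₜ[ℂ] c) = _
    rw [hG]
  have e5 : ((D.Δl ω).map fun p => W (p.1 ⊗ₜ[ℂ] D2 p.2)).sum
      = ((D.Δl ω).map fun p => epsi p.2 * f p.1 x).sum := by
    refine congrArg List.sum (List.map_congr_left fun p _ => ?_)
    rw [← hf p.2 p.1 x]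
    refine Eq.symm ?_
    calc ((D.sw 2 p.2).map fun v => f (D.Sinv (v 0) * p.1 * v 1) (A.act (v 2) x)).sum
        = ((D.sw 2 p.2).map fun v => (W ∘ₗ TensorProduct.mk ℂ H (H ⊗[ℂ] (H ⊗[ℂ] H)) p.1)
            (v 0 ⊗ₜ[ℂ] (v 1 ⊗ₜ[ℂ] v 2))).sum :=
          congrArg List.sum (List.map_congr_left fun v _ => (hWt (v 0) (v 1) (v 2) p.1).symm)
      _ = (W ∘ₗ TensorProduct.mk ℂ H (H ⊗[ℂ] (H ⊗[ℂ] H)) p.1)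
            ((Coalgebra.comul (R := ℂ)).lTensor H (Coalgebra.comul (R := ℂ) p.2)) :=
          D.sw2_sum _ p.2
      _ = W (p.1 ⊗ₜ[ℂ] D2 p.2) := rfl
  have e6 : ((D.Δl ω).map fun p => epsi p.2 * f p.1 x).sum = f ω x := by
    let χ : H ⊗[ℂ] ℂ →ₗ[ℂ] ℂ := (f.flip x) ∘ₗ (TensorProduct.rid ℂ H).toLinearMap
    let Φ6 : H ⊗[ℂ] H →ₗ[ℂ] ℂ := χ ∘ₗ (Coalgebra.counit (R := ℂ) (A := H)).lTensor H
    have hpt : ∀ p : H × H, Φ6 (p.1 ⊗ₜ[ℂ] p.2) = epsi p.2 * f p.1 x := fun p => by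
      show χ ((Coalgebra.counit (R := ℂ) (A := H)).lTensor H (p.1 ⊗ₜ[ℂ] p.2)) = _
      rw [LinearMap.lTensor_tmul]
      show f.flip x (TensorProduct.rid ℂ H (p.1 ⊗ₜ[ℂ] (Coalgebra.counit (R := ℂ) p.2))) = _
      rw [TensorProduct.rid_tmul]
      simp [epsi, smul_eq_mul]
    have hfin : Φ6 (Coalgebra.comul (R := ℂ) ω) = f ω x := by
      show χ ((Coalgebra.counit (R := ℂ) (A := H)).lTensor H (Coalgebra.comul (R := ℂ) ω)) = _
      rw [Coalgebra.lTensor_counit_comul]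
      show f.flip x (TensorProduct.rid ℂ H (ω ⊗ₜ[ℂ] (1 : ℂ))) = _
      rw [TensorProduct.rid_tmul]
      simp
    calc ((D.Δl ω).map fun p => epsi p.2 * f p.1 x).sum
        = ((D.Δl ω).map fun p => Φ6 (p.1 ⊗ₜ[ℂ] p.2)).sum :=
          congrArg List.sum (List.map_congr_left fun p _ => (hpt p).symm)
      _ = Φ6 (Coalgebra.comul (R := ℂ) ω) := D.Δl_sum Φ6 ω
      _ = f ω x := hfin
  rw [e1, ← e2, e3, e5, e6]


end
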